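/- Let c ∈ ℂ be nonzero and let h ∈ ℂ[[X,Y]] be a formal power series in two variables. If the substitution Y ↦ c·X annihilates h (i.e. the one-variable series Σ_n (Σ_{i+j=n} coeff_{(i,j)}(h)·c^j)·X^n is zero), then (Y − c·X) divides h in ℂ[[X,Y]]. -/

import Mathlib

/-- The substitution `Y ↦ c·X` from `ℂ[[X,Y]]` to `ℂ[[X]]`:
`(Σ h_{ij} Xⁱ Yʲ) ↦ Σ_n (Σ_{i+j=n} h_{ij} cʲ) Xⁿ`. -/
noncomputable def substYcX (c : ℂ) (h : MvPowerSeries (Fin 2) ℂ) : PowerSeries ℂ :=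
  PowerSeries.mk fun n => ∑ p ∈ Finset.HasAntidiagonal.antidiagonal n,
    MvPowerSeries.coeff (R := ℂ) (Finsupp.single (0 : Fin 2) p.1 + Finsupp.single 1 p.2) h * c ^ p.2

lemma finsupp_fin2_eq (m : Fin 2 →₀ ℕ) :
    m = Finsupp.single 0 (m 0) + Finsupp.single 1 (m 1) := by
  ext a
  fin_cases a <;> simp [Finsupp.single_apply]

/-- If the substitution `Y ↦ cX` (with `c ≠ 0`) annihilates `h ∈ ℂ[[X,Y]]`,
then `Y − cX` divides `h`. -/
theorem vanishing_on_line_divisible (c : ℂ) (hc : c ≠ 0)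
    (h : MvPowerSeries (Fin 2) ℂ) (hz : substYcX c h = 0) :
    ∃ g : MvPowerSeries (Fin 2) ℂ,
      h = (MvPowerSeries.X 1 - MvPowerSeries.C (σ := Fin 2) (R := ℂ) c * MvPowerSeries.X 0) * g := by
  classical
  set H : ℕ → ℕ → ℂ := fun i j =>
    MvPowerSeries.coeff (R := ℂ) (Finsupp.single (0 : Fin 2) i + Finsupp.single 1 j) h with hH
  have hz' : ∀ n, ∑ k ∈ Finset.range (n + 1), H k (n - k) * c ^ (n - k) = 0 := by
    intro n
    have := congrArg (PowerSeries.coeff n) hz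
    rw [substYcX, PowerSeries.coeff_mk, map_zero,
      Finset.Nat.sum_antidiagonal_eq_sum_range_succ_mk] at this
    exact this
  -- the candidate quotient
  set G : ℕ → ℕ → ℂ := fun i j =>
    ∑ k ∈ Finset.range (i + 1), c ^ k * H (i - k) (j + 1 + k) with hG
  refine ⟨@id (MvPowerSeries (Fin 2) ℂ) (fun m => G (m 0) (m 1)), ?_⟩
  ext m
  -- compute the coefficient of the product
  have key : ∀ (s : Fin 2) (g : MvPowerSeries (Fin 2) ℂ),
      MvPowerSeries.coeff (R := ℂ) m (MvPowerSeries.X s * g) =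
        if Finsupp.single s 1 ≤ m then
          MvPowerSeries.coeff (R := ℂ) (m - Finsupp.single s 1) g else 0 := by
    intro s g
    rw [MvPowerSeries.X_def, MvPowerSeries.coeff_monomial_mul]
    simp
  rw [sub_mul, map_sub, mul_assoc, MvPowerSeries.coeff_C_mul, key, key]
  have hle : ∀ s : Fin 2, Finsupp.single s 1 ≤ m ↔ 1 ≤ m s := by
    intro s; rw [Finsupp.single_le_iff]
  have hcoeff : ∀ n : Fin 2 →₀ ℕ, MvPowerSeries.coeff (R := ℂ) n
      (@id (MvPowerSeries (Fin 2) ℂ) (fun m => G (m 0) (m 1))) = G (n 0) (n 1) := fun _ => rfl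
  rw [hcoeff, hcoeff]
  have hsub : ∀ s t : Fin 2, ((m - Finsupp.single s 1 : Fin 2 →₀ ℕ)) t = m t - (if s = t then 1 else 0) := by
    intro s t; rw [Finsupp.tsub_apply, Finsupp.single_apply]
  have hm : MvPowerSeries.coeff (R := ℂ) m h = H (m 0) (m 1) := by
    rw [hH]; exact congrArg (fun n => MvPowerSeries.coeff (R := ℂ) n h) (finsupp_fin2_eq m)
  rw [hm, hsub, hsub, hsub, hsub]
  simp only [hle]
  norm_num
  suffices hmain : ∀ i j : ℕ, H i j =
      (if 1 ≤ j then G i (j - 1) else 0) - (if 1 ≤ i then c * G (i - 1) j else 0) by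
    exact hmain (m 0) (m 1)
  intro i j
  rcases Nat.eq_zero_or_pos j with hj0 | hjpos
  · subst hj0
    simp only [if_neg (by norm_num : ¬ (1:ℕ) ≤ 0)]
    rcases Nat.eq_zero_or_pos i with hi0 | hipos
    · subst hi0
      simp only [if_neg (by norm_num : ¬ (1:ℕ) ≤ 0)]
      have := hz' 0
      simpa using this
    · have hi1 : 1 ≤ i := hipos
      rw [if_pos hi1]
      have hzi := hz' i
      have hGi : c * G (i - 1) 0 = ∑ k ∈ Finset.range i, c ^ (k + 1) * H (i - 1 - k) (1 + k) := by
        rw [hG, Finset.mul_sum]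
        rw [Nat.sub_add_cancel hipos]
        refine Finset.sum_congr rfl fun k hk => ?_
        ring
      have hreflect : ∑ k ∈ Finset.range (i+1), H k (i - k) * c ^ (i - k)
          = H i 0 + ∑ k ∈ Finset.range i, c ^ (k + 1) * H (i - 1 - k) (1 + k) := by
        rw [Finset.sum_range_succ, Nat.sub_self, pow_zero, mul_one, add_comm]
        congr 1
        rw [← Finset.sum_range_reflect]
        refine Finset.sum_congr rfl fun k hk => ?_
        rw [Finset.mem_range] at hk
        have h1 : i - (i - 1 - k) = k + 1 := by omega
        have h2 : 1 + k = i - (i - 1 - k) := by omega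
        rw [h1, add_comm 1 k]
        ring
      rw [hreflect] at hzi
      rw [hGi]
      linear_combination hzi
  · have hj1 : 1 ≤ j := hjpos
    rw [if_pos hj1]
    rcases Nat.eq_zero_or_pos i with hi0 | hipos
    · subst hi0
      simp only [if_neg (by norm_num : ¬ (1:ℕ) ≤ 0), mul_zero, sub_zero]
      rw [hG]
      simp only [Nat.zero_add, Finset.range_one, Finset.sum_singleton, pow_zero, one_mul,
        Nat.sub_zero]
      congr 1
      omega
    · have hi1 : 1 ≤ i := hipos
      rw [if_pos hi1]
      rw [hG]
      have e1 : j - 1 + 1 = j := Nat.sub_add_cancel hjpos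
      have e2 : i - 1 + 1 = i := Nat.sub_add_cancel hipos
      simp only []
      rw [e1, e2, Finset.mul_sum]
      rw [Finset.sum_range_succ']
      simp only [pow_zero, one_mul, Nat.sub_zero, add_zero]
      have hterm : ∀ k, c * (c ^ k * H (i - 1 - k) (j + 1 + k))
          = c ^ (k + 1) * H (i - (k + 1)) (j + 1 + k) := by
        intro k
        have h3 : i - 1 - k = i - (k + 1) := by omega
        rw [h3]; ring
      rw [Finset.sum_congr rfl fun k _ => hterm k]
      have hterm2 : ∀ (k:ℕ), c ^ (k + 1) * H (i - (k + 1)) (j + (k + 1))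
          = c ^ (k + 1) * H (i - (k + 1)) (j + 1 + k) := by
        intro k
        congr 2
        omega
      rw [Finset.sum_congr rfl fun k _ => hterm2 k]
      ring
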